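/- arXiv:2009.02389 — 2 statements merged into one kernel-verified Lean document; each statement's English description precedes it below -/
import Mathlib

section
/- Let s be a weak composition, T an s-decreasing tree, and 1 ≤ a < b ≤ n such that (a,b) is a tree ascent of T with s(a) > 0. Then no pair (e,b) with e a labeled vertex of T^a and e < a is a tree ascent of T. -/
open scoped Classical

/-- An `s`-decreasing tree with internal vertices `1,…,n` (the root is `n`), encoded by
recording, for each non-root internal vertex `v`, its parent `parent v` (an internal vertex
with a larger label, so that labels decrease away from the root) and the index `idx v` of
the child slot of `parent v` (among `0,…,s (parent v)`, left to right) containing `v`.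
Distinct internal vertices occupy distinct child slots; all remaining slots are leaves. -/
structure SDecTree (n : ℕ) (s : ℕ → ℕ) where
  parent : ℕ → ℕ
  idx : ℕ → ℕ
  parent_gt : ∀ v, 1 ≤ v → v < n → v < parent v
  parent_le : ∀ v, 1 ≤ v → v < n → parent v ≤ n
  idx_le : ∀ v, 1 ≤ v → v < n → idx v ≤ s (parent v)
  slot_inj : ∀ v w, 1 ≤ v → v < n → 1 ≤ w → w < n →
      parent v = parent w → idx v = idx w → v = w
  parent_out : ∀ v, v = 0 ∨ n ≤ v → parent v = 0
  idx_out : ∀ v, v = 0 ∨ n ≤ v → idx v = 0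

namespace SDecTree

variable {n : ℕ} {s : ℕ → ℕ}

/-- `y` is a weak ancestor of `x`, i.e. `x` is a labeled vertex of the subtree `T^y`. -/
def Descend (T : SDecTree n s) (x y : ℕ) : Prop :=
  ∃ k, T.parent^[k] x = y ∧ ∀ m ≤ k, 1 ≤ T.parent^[m] x ∧ T.parent^[m] x ≤ n

/-- `x` is a labeled vertex of the subtree `T^y_j` rooted at the `j`-th child of `y`. -/
def InSub (T : SDecTree n s) (y j x : ℕ) : Prop :=
  ∃ c, T.Descend x c ∧ T.parent c = y ∧ T.idx c = j

/-- `x` lies strictly left of `y` in the planar tree `T`. -/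
def LeftOf (T : SDecTree n s) (x y : ℕ) : Prop :=
  ∃ z j₁ j₂, j₁ < j₂ ∧ T.InSub z j₁ x ∧ T.InSub z j₂ y

/-- The cardinality `#_T(y,x)` of the pair `(y,x)`: it is `j` if `x ∈ T^y_j`
(so `0` if `x ∈ T^y_0` and `s y` if `x ∈ T^y_{s y}`), `0` if `x` is left of `y`, and
`s y` if `x` is right of `y`; it is `0` for out-of-range pairs. -/
noncomputable def card (T : SDecTree n s) (y x : ℕ) : ℕ :=
  if h : ∃ j, T.InSub y j x then h.choose
  else if 1 ≤ x ∧ x < y ∧ y ≤ n ∧ ¬ T.LeftOf x y then s y else 0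

/-- `x` is a labeled vertex of `T^a ∖ 0`, i.e. of `T^a` with `T^a_0` replaced by a leaf. -/
def InSubMinus0 (T : SDecTree n s) (a x : ℕ) : Prop :=
  x = a ∨ ∃ j, 0 < j ∧ T.InSub a j x

/-- `(a,b)` is a tree ascent of `T`. -/
def TreeAscent (T : SDecTree n s) (a b : ℕ) : Prop :=
  1 ≤ a ∧ a < b ∧ b ≤ n ∧
  (∃ i, i < s b ∧ T.InSub b i a) ∧
  (∀ e j, a < e → e < b → T.InSub e j a → j = s e) ∧
  (0 < s a → ∀ x, ¬ T.InSub a (s a) x)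

end SDecTree

/-- A multi-inversion set (encoded by its multiplicity function) is transitive:
if `a < b < c` then `#(b,a) = 0` or `#(c,a) ≥ #(c,b)`. -/
def IsTransitiveInv (I : ℕ → ℕ → ℕ) : Prop :=
  ∀ a b c, a < b → b < c → I b a = 0 ∨ I c b ≤ I c a

/-- The transitive closure of a multi-inversion set: the smallest (by inclusion, i.e.
pointwise on multiplicities) transitive multi-inversion set containing it. -/
noncomputable def tcInv (I : ℕ → ℕ → ℕ) : ℕ → ℕ → ℕ := fun y x =>
  sInf {m | ∃ J : ℕ → ℕ → ℕ, IsTransitiveInv J ∧ (∀ y' x', I y' x' ≤ J y' x') ∧ J y x = m}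

/-- Add one copy of the inversion `(b,a)` to `I`, capping the multiplicity at `s b`. -/
def addInv (s : ℕ → ℕ) (I : ℕ → ℕ → ℕ) (b a : ℕ) : ℕ → ℕ → ℕ := fun y x =>
  if y = b ∧ x = a then min (I y x + 1) (s y) else I y x

namespace SDecTree

variable {n : ℕ} {s : ℕ → ℕ}

/-- The `s`-weak order: `T ⪯ Z` iff `#_T(y,x) ≤ #_Z(y,x)` for all pairs. -/
def wle (T Z : SDecTree n s) : Prop := ∀ y x, T.card y x ≤ Z.card y x

/-- Strict `s`-weak order. -/
def wlt (T Z : SDecTree n s) : Prop := wle T Z ∧ ¬ wle Z T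

/-- Cover relation in the `s`-weak order. -/
def wcov (T Z : SDecTree n s) : Prop := wlt T Z ∧ ∀ U, wlt T U → wlt U Z → False

/-- `W` is the join of `T` and `Z` in the `s`-weak order. -/
def IsJoin (T Z W : SDecTree n s) : Prop :=
  wle T W ∧ wle Z W ∧ ∀ U, wle T U → wle Z U → wle W U

/-- `Z` is the `s`-tree rotation of `T` along the tree ascent `(a,b)`, i.e.
`inv Z = (inv T + (b,a))^tc`. -/
def IsRotation (T Z : SDecTree n s) (a b : ℕ) : Prop :=
  T.TreeAscent a b ∧
  ∀ y x, 1 ≤ x → x < y → y ≤ n → Z.card y x = tcInv (addInv s T.card b a) y x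

/-- The set `A_T(a,b)` of inversions added by a rotation producing `Z`: the pairs `(f,e)`
with `#_Z(f,e) > #_T(f,e)`. -/
def Aset (T Z : SDecTree n s) : Set (ℕ × ℕ) :=
  {p | T.card p.1 p.2 < Z.card p.1 p.2}

/-- The set `A_T(a,b)` described directly via the transitive closure. -/
def ARot (T : SDecTree n s) (a b : ℕ) : Set (ℕ × ℕ) :=
  {p | T.card p.1 p.2 < tcInv (addInv s T.card b a) p.1 p.2}

/-- The set `F_T(a,c)` (here `b` and `d` are the partners of `a` and `c` in the
respective tree ascents `(a,b)` and `(c,d)`): it is `{(d,e) : e ∈ T^a∖0}` if `b = c`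
and `a ∈ T^c_0`, and empty otherwise. -/
def Fset (T : SDecTree n s) (a b c d : ℕ) : Set (ℕ × ℕ) :=
  {p | b = c ∧ T.InSub c 0 a ∧ p.1 = d ∧ T.InSubMinus0 a p.2}

/-- `T` is an `s`-Tamari tree: `#_T(c,a) ≤ #_T(c,b)` whenever `a < b < c`. -/
def IsTamari (T : SDecTree n s) : Prop :=
  ∀ a b c, a < b → b < c → T.card c a ≤ T.card c b

/-- `(a,b)` is a Tamari tree ascent of `T`: `a` is a non-rightmost child of `b`. -/
def TamariAscent (T : SDecTree n s) (a b : ℕ) : Prop :=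
  1 ≤ a ∧ a < n ∧ T.parent a = b ∧ T.card b a < s b

/-- `Z` is the `s`-Tamari rotation of `T` along the Tamari tree ascent `(a,b)`. -/
def IsTamRotation (T Z : SDecTree n s) (a b : ℕ) : Prop :=
  T.TamariAscent a b ∧
  ∀ y x, 1 ≤ x → x < y → y ≤ n → Z.card y x = tcInv (addInv s T.card b a) y x

/-- Cover relation in the `s`-Tamari lattice. -/
def tamcov (T Z : SDecTree n s) : Prop :=
  IsTamari T ∧ IsTamari Z ∧ wlt T Z ∧ ∀ U, IsTamari U → wlt T U → wlt U Z → False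

/-- `W` is the join of `T` and `Z` in the `s`-Tamari lattice. -/
def IsTamJoin (T Z W : SDecTree n s) : Prop :=
  IsTamari W ∧ wle T W ∧ wle Z W ∧ ∀ U, IsTamari U → wle T U → wle Z U → wle W U

/-- The open interval `(T,Z)` in the `s`-weak order. -/
def OpenInterval (T Z : SDecTree n s) : Set (SDecTree n s) := {U | wlt T U ∧ wlt U Z}

/-- A set of trees forming a chain in the `s`-weak order. -/
def IsChainSet (C : Set (SDecTree n s)) : Prop :=
  C.Pairwise fun U V => wlt U V ∨ wlt V U

/-- The geometric realization of the order complex `Δ(T,Z)` of the open interval `(T,Z)`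
in the `s`-weak order: the space of finitely supported probability vectors on the vertex
set whose support is a chain of the open interval. -/
def orderComplex (T Z : SDecTree n s) : Set (SDecTree n s → ℝ) :=
  {f | (∀ U, 0 ≤ f U) ∧ (Function.support f).Finite ∧
    Function.support f ⊆ OpenInterval T Z ∧ IsChainSet (Function.support f) ∧
    ∑ᶠ U, f U = 1}

/-- The geometric realization of the order complex of the open interval `(T,Z)` in the
`s`-Tamari lattice. -/
def tamOrderComplex (T Z : SDecTree n s) : Set (SDecTree n s → ℝ) :=
  {f | (∀ U, 0 ≤ f U) ∧ (Function.support f).Finite ∧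
    Function.support f ⊆ {U | IsTamari U ∧ wlt T U ∧ wlt U Z} ∧
    IsChainSet (Function.support f) ∧ ∑ᶠ U, f U = 1}

end SDecTree

/-- The list of labels of the consecutive cover relations along a saturated chain,
recorded as a list of poset elements. -/
def labelsOf {α : Type*} (lab : α → α → ℕ) (L : List α) : List ℕ :=
  (L.zip L.tail).map fun p => lab p.1 p.2

/-- If `(a,b)` is a tree ascent of the `s`-decreasing tree `T` with
`s a > 0`, then no pair `(e,b)` with `e` a labeled vertex of `T^a` and `e < a` is a
tree ascent of `T`. -/
theorem no_lower_ascents (n : ℕ) (s : ℕ → ℕ) (T : SDecTree n s) (a b : ℕ)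
    (hasc : T.TreeAscent a b) (hsa : 0 < s a) :
    ∀ e, e < a → T.Descend e a → ¬ T.TreeAscent e b := by
  rintro e he hdesc hasc'
  obtain ⟨h1, hab, hbn, _, hii, hiii⟩ := hasc
  obtain ⟨_, heb, _, _, hii', _⟩ := hasc'
  obtain ⟨k, hk, hbound⟩ := hdesc
  have hk0 : k ≠ 0 := by rintro rfl; simp at hk; omega
  set c := T.parent^[k - 1] e with hc
  have hpc : T.parent c = a := by
    have h := Function.iterate_succ_apply' T.parent (k - 1) e
    rw [Nat.succ_eq_add_one, Nat.sub_add_cancel (Nat.one_le_iff_ne_zero.mpr hk0)] at h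
    rw [hc, ← h]; exact hk
  have hsub : T.InSub a (T.idx c) e :=
    ⟨c, ⟨k - 1, rfl, fun m hm => hbound m (by omega)⟩, hpc, rfl⟩
  have hj : T.idx c = s a := hii' a (T.idx c) he hab hsub
  exact hiii hsa e (hj ▸ hsub)
end

section
/- Let s be a weak composition, T an s-decreasing tree, and (a,b) a tree ascent of T with Z the s-tree rotation of T along (a,b). Then for 1 ≤ e < f ≤ n, the pair (f,e) lies in A_T(a,b) if and only if f = b and e is a labeled vertex of T^a∖0, and in that case #_Z(f,e) = #_T(f,e) + 1. -/
open scoped Classical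

namespace SDecTree

variable {n : ℕ} {s : ℕ → ℕ} (T : SDecTree n s)

lemma mem_of_parent_pos {c : ℕ} (h : 1 ≤ T.parent c) : 1 ≤ c ∧ c < n := by
  by_contra hc
  have h0 : c = 0 ∨ n ≤ c := by omega
  rw [T.parent_out c h0] at h
  omega

lemma descend_mem {x y : ℕ} (h : T.Descend x y) :
    (1 ≤ x ∧ x ≤ n) ∧ (1 ≤ y ∧ y ≤ n) := by
  obtain ⟨k, hk, hm⟩ := h
  refine ⟨by simpa using hm 0 (Nat.zero_le _), ?_⟩
  rw [← hk]; exact hm k le_rfl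

lemma descend_refl {x : ℕ} (h1 : 1 ≤ x) (h2 : x ≤ n) : T.Descend x x :=
  ⟨0, rfl, fun m hm => by interval_cases m; exact ⟨h1, h2⟩⟩

lemma descend_trans {x y z : ℕ} (h1 : T.Descend x y) (h2 : T.Descend y z) :
    T.Descend x z := by
  obtain ⟨k1, e1, m1⟩ := h1
  obtain ⟨k2, e2, m2⟩ := h2
  refine ⟨k2 + k1, ?_, ?_⟩
  · rw [Function.iterate_add_apply, e1, e2]
  · intro m hm
    rcases le_or_gt m k1 with h | h
    · exact m1 m h
    · have he : T.parent^[m] x = T.parent^[m - k1] y := by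
        rw [← e1, ← Function.iterate_add_apply]
        congr 1; omega
      rw [he]; exact m2 _ (by omega)

lemma chain_bound {x k : ℕ}
    (hmem : ∀ m ≤ k, 1 ≤ T.parent^[m] x ∧ T.parent^[m] x ≤ n)
    {m : ℕ} (hm : m < k) : T.parent^[m] x < n := by
  rcases lt_or_eq_of_le (hmem m hm.le).2 with h | h
  · exact h
  · exfalso
    have h0 : T.parent (T.parent^[m] x) = 0 := T.parent_out _ (Or.inr h.ge)
    have h1 := (hmem (m + 1) hm).1
    rw [Function.iterate_succ_apply'] at h1
    omega

lemma chain_lt {x k : ℕ}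
    (hmem : ∀ m ≤ k, 1 ≤ T.parent^[m] x ∧ T.parent^[m] x ≤ n) :
    ∀ m' ≤ k, ∀ m < m', T.parent^[m] x < T.parent^[m'] x := by
  intro m' hm'
  induction m' with
  | zero => omega
  | succ t ih =>
    intro m hm
    have hstep : T.parent^[t] x < T.parent^[t + 1] x := by
      rw [Function.iterate_succ_apply']
      exact T.parent_gt _ (hmem t (by omega)).1 (T.chain_bound hmem (by omega))
    rcases Nat.lt_succ_iff_lt_or_eq.mp hm with h | h
    · exact lt_trans (ih (by omega) m h) hstep
    · subst h; exact hstep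

lemma descend_le {x y : ℕ} (h : T.Descend x y) : x ≤ y := by
  obtain ⟨k, hk, hm⟩ := h
  rcases Nat.eq_zero_or_pos k with rfl | hk0
  · simp at hk; omega
  · have := T.chain_lt hm k le_rfl 0 hk0
    simp only [Function.iterate_zero, id_eq] at this
    omega

lemma descend_antisymm {x y : ℕ} (h1 : T.Descend x y) (h2 : T.Descend y x) :
    x = y := le_antisymm (T.descend_le h1) (T.descend_le h2)

lemma descend_of_chain {x k1 k2 : ℕ} (h12 : k1 ≤ k2)
    (hmem : ∀ m ≤ k2, 1 ≤ T.parent^[m] x ∧ T.parent^[m] x ≤ n) :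
    T.Descend (T.parent^[k1] x) (T.parent^[k2] x) := by
  refine ⟨k2 - k1, ?_, ?_⟩
  · rw [← Function.iterate_add_apply]; congr 1; omega
  · intro m hm
    rw [← Function.iterate_add_apply]
    exact hmem (m + k1) (by omega)

lemma descend_total {x y z : ℕ} (h1 : T.Descend x y) (h2 : T.Descend x z) :
    T.Descend y z ∨ T.Descend z y := by
  obtain ⟨k1, e1, m1⟩ := h1
  obtain ⟨k2, e2, m2⟩ := h2
  rcases le_total k1 k2 with h | h
  · left; rw [← e1, ← e2]; exact T.descend_of_chain h m2
  · right; rw [← e1, ← e2]; exact T.descend_of_chain h m1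

lemma descend_step {x : ℕ} (h1 : 1 ≤ x) (hx : x < n) : T.Descend x (T.parent x) := by
  refine ⟨1, by simp, ?_⟩
  intro m hm
  interval_cases m
  · exact ⟨h1, hx.le⟩
  · simp only [Function.iterate_one]
    have := T.parent_gt x h1 hx
    exact ⟨by omega, T.parent_le x h1 hx⟩

lemma descend_root (x : ℕ) (h1 : 1 ≤ x) (h2 : x ≤ n) : T.Descend x n := by
  have H : ∀ k x, 1 ≤ x → x ≤ n → n - x ≤ k → T.Descend x n := by
    intro k
    induction k with
    | zero =>
      intro x h1 h2 h3
      have hx : x = n := by omega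
      subst hx; exact T.descend_refl h1 h2
    | succ t ih =>
      intro x h1 h2 h3
      by_cases he : x = n
      · subst he; exact T.descend_refl h1 h2
      · have hlt : x < n := by omega
        have hg := T.parent_gt x h1 hlt
        have hle := T.parent_le x h1 hlt
        exact T.descend_trans (T.descend_step h1 hlt) (ih _ (by omega) hle (by omega))
  exact H (n - x) x h1 h2 le_rfl

lemma descend_entry_child {x z : ℕ} (h : T.Descend x z) (hne : x ≠ z) :
    ∃ c, T.Descend x c ∧ T.parent c = z ∧ 1 ≤ c ∧ c < n := by
  obtain ⟨k, hk, hm⟩ := h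
  have hk0 : k ≠ 0 := by rintro rfl; simp at hk; exact hne hk
  have hpc : T.parent (T.parent^[k - 1] x) = T.parent^[k] x := by
    conv_rhs => rw [show k = k - 1 + 1 by omega]
    exact (Function.iterate_succ_apply' _ _ _).symm
  refine ⟨T.parent^[k - 1] x, ⟨k - 1, rfl, fun m hm' => hm m (by omega)⟩, ?_, ?_⟩
  · rw [hpc, hk]
  · have hz1 : 1 ≤ T.parent^[k] x := (hm k le_rfl).1
    exact T.mem_of_parent_pos (c := T.parent^[k - 1] x) (by omega)

lemma insub_unique_aux {c c' y : ℕ} (hd : T.Descend c c') (hne : c ≠ c')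
    (hp : T.parent c = y) (hp' : T.parent c' = y) : False := by
  obtain ⟨k, hk, hm⟩ := hd
  have hk0 : k ≠ 0 := by rintro rfl; simp at hk; exact hne hk
  have h1 : T.parent^[1] c = y := by rw [Function.iterate_one, hp]
  have hy1 : 1 ≤ y := h1 ▸ (hm 1 (by omega)).1
  have hyc : y ≤ c' := by
    rcases Nat.lt_or_ge 1 k with h | h
    · rw [← h1, ← hk]; exact le_of_lt (T.chain_lt hm k le_rfl 1 h)
    · have hk1 : k = 1 := by omega
      rw [← h1, ← hk, hk1]
  have hmm := T.mem_of_parent_pos (c := c') (hp' ▸ hy1)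
  have := T.parent_gt c' hmm.1 hmm.2
  omega

lemma insub_unique {y j j' x : ℕ} (h : T.InSub y j x) (h' : T.InSub y j' x) :
    j = j' := by
  obtain ⟨c, hc, hp, hi⟩ := h
  obtain ⟨c', hc', hp', hi'⟩ := h'
  suffices hcc : c = c' by subst hcc; rw [← hi, ← hi']
  by_contra hne
  rcases T.descend_total hc hc' with hd | hd
  · exact T.insub_unique_aux hd hne hp hp'
  · exact T.insub_unique_aux hd (Ne.symm hne) hp' hp

lemma insub_comp {x w z j : ℕ} (hd : T.Descend x w) (h : T.InSub z j w) :
    T.InSub z j x := by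
  obtain ⟨c, hc, hp, hi⟩ := h
  exact ⟨c, T.descend_trans hd hc, hp, hi⟩

lemma insub_mem {z j x : ℕ} (h : T.InSub z j x) : 1 ≤ x ∧ x ≤ n := by
  obtain ⟨c, hc, _, _⟩ := h
  exact (T.descend_mem hc).1

lemma insub_descend {y j x : ℕ} (h : T.InSub y j x) (hy : 1 ≤ y) :
    T.Descend x y := by
  obtain ⟨c, hc, hp, _⟩ := h
  have hm := T.mem_of_parent_pos (c := c) (hp ▸ hy)
  exact T.descend_trans hc (hp ▸ T.descend_step hm.1 hm.2)

lemma insub_lt {y j x : ℕ} (h : T.InSub y j x) (hy : 1 ≤ y) : x < y := by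
  obtain ⟨c, hc, hp, _⟩ := h
  have hm := T.mem_of_parent_pos (c := c) (hp ▸ hy)
  have := T.parent_gt c hm.1 hm.2
  have := T.descend_le hc
  omega

lemma insub_le_s {y j x : ℕ} (h : T.InSub y j x) (hy : 1 ≤ y) : j ≤ s y := by
  obtain ⟨c, hc, hp, hi⟩ := h
  have hm := T.mem_of_parent_pos (c := c) (hp ▸ hy)
  have := T.idx_le c hm.1 hm.2
  rw [hp, hi] at this
  exact this

lemma insub_pos {z j x : ℕ} (h : T.InSub z j x) (hj : 0 < j) : 1 ≤ z := by
  rcases Nat.eq_zero_or_pos z with rfl | h1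
  · obtain ⟨c, hc, hp, hi⟩ := h
    have hm := (T.descend_mem hc).2
    rcases lt_or_eq_of_le hm.2 with hlt | heq
    · have := T.parent_gt c hm.1 hlt; omega
    · have := T.idx_out c (Or.inr heq.ge); omega
  · exact h1

lemma insub_up {x w z j : ℕ} (hxw : T.Descend x w) (hwz : T.Descend w z)
    (hne : w ≠ z) (h : T.InSub z j x) : T.InSub z j w := by
  obtain ⟨c, hc, hp, hca, hcb⟩ := T.descend_entry_child hwz hne
  have h2 : T.InSub z (T.idx c) x := ⟨c, T.descend_trans hxw hc, hp, rfl⟩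
  have h3 := T.insub_unique h2 h
  exact ⟨c, hc, hp, h3⟩

lemma descend_insub_eq {u w m ja jb : ℕ} (hd : T.Descend u w)
    (ha : T.InSub m ja u) (hb : T.InSub m jb w) : ja = jb :=
  T.insub_unique ha (T.insub_comp hd hb)

/-- `x ∈ T^y` excludes `x` being left of `y` (in either direction). -/
lemma descend_not_leftOf {u w : ℕ} (hd : T.Descend u w) :
    ¬ T.LeftOf u w ∧ ¬ T.LeftOf w u := by
  constructor
  · rintro ⟨m, j1, j2, hj, h1, h2⟩
    have := T.descend_insub_eq hd h1 h2
    omega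
  · rintro ⟨m, j1, j2, hj, h1, h2⟩
    have := T.descend_insub_eq hd h2 h1
    omega

lemma leftOf_asymm {x y : ℕ} (h : T.LeftOf x y) : ¬ T.LeftOf y x := by
  obtain ⟨m1, p1, q1, hpq1, hx1, hy1⟩ := h
  rintro ⟨m2, a2, b2, hab2, hy2, hx2⟩
  have hm1 : 1 ≤ m1 := T.insub_pos hy1 (by omega)
  have hm2 : 1 ≤ m2 := T.insub_pos hx2 (by omega)
  have hdx1 : T.Descend x m1 := T.insub_descend hx1 hm1
  have hdx2 : T.Descend x m2 := T.insub_descend hx2 hm2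
  have hdy1 : T.Descend y m1 := T.insub_descend hy1 hm1
  have hdy2 : T.Descend y m2 := T.insub_descend hy2 hm2
  rcases T.descend_total hdx1 hdx2 with hd | hd
  · by_cases hmm : m1 = m2
    · subst hmm
      have e1 := T.insub_unique hx1 hx2
      have e2 := T.insub_unique hy1 hy2
      omega
    · have h1 := T.insub_up hdx1 hd hmm hx2
      have h2 := T.insub_up hdy1 hd hmm hy2
      have := T.insub_unique h1 h2
      omega
  · by_cases hmm : m2 = m1
    · subst hmm
      have e1 := T.insub_unique hx1 hx2
      have e2 := T.insub_unique hy1 hy2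
      omega
    · have h1 := T.insub_up hdx2 hd hmm hx1
      have h2 := T.insub_up hdy2 hd hmm hy1
      have := T.insub_unique h1 h2
      omega

lemma trichotomy {x y : ℕ} (h1 : 1 ≤ x) (hxy : x < y) (h2 : y ≤ n) :
    (∃ j, T.InSub y j x) ∨ T.LeftOf x y ∨ T.LeftOf y x := by
  set S := {z | T.Descend x z ∧ T.Descend y z} with hS
  have hnS : n ∈ S := ⟨T.descend_root x h1 (by omega), T.descend_root y (by omega) h2⟩
  have hne : S.Nonempty := ⟨n, hnS⟩
  set m := sInf S with hmdef
  have hm : m ∈ S := Nat.sInf_mem hne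
  by_cases hmy : m = y
  · left
    obtain ⟨c, hc, hp, hca, hcb⟩ := T.descend_entry_child hm.1 (by omega)
    exact ⟨T.idx c, c, hc, hmy ▸ hp, rfl⟩
  · have hmx : m ≠ x := by
      intro h
      have := T.descend_le hm.2
      omega
    obtain ⟨c1, hc1d, hc1p, hc1a, hc1b⟩ := T.descend_entry_child hm.1 (Ne.symm hmx)
    obtain ⟨c2, hc2d, hc2p, hc2a, hc2b⟩ := T.descend_entry_child hm.2 (Ne.symm hmy)
    have hcc : c1 ≠ c2 := by
      rintro rfl
      have hmem : c1 ∈ S := ⟨hc1d, hc2d⟩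
      have hle : m ≤ c1 := Nat.sInf_le hmem
      have hlt : c1 < m := by
        rw [← hc1p]; exact T.parent_gt _ hc1a hc1b
      omega
    have hidx : T.idx c1 ≠ T.idx c2 := fun h =>
      hcc (T.slot_inj _ _ hc1a hc1b hc2a hc2b (hc1p.trans hc2p.symm) h)
    rcases lt_or_gt_of_ne hidx with hlt | hlt
    · right; left
      exact ⟨m, _, _, hlt, ⟨c1, hc1d, hc1p, rfl⟩, ⟨c2, hc2d, hc2p, rfl⟩⟩
    · right; right
      exact ⟨m, _, _, hlt, ⟨c2, hc2d, hc2p, rfl⟩, ⟨c1, hc1d, hc1p, rfl⟩⟩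

lemma card_insub {y j x : ℕ} (h : T.InSub y j x) : T.card y x = j := by
  have he : ∃ j, T.InSub y j x := ⟨j, h⟩
  rw [card, dif_pos he]
  exact T.insub_unique he.choose_spec h

lemma card_left {x y : ℕ} (h : T.LeftOf x y) : T.card y x = 0 := by
  have hni : ¬ ∃ j, T.InSub y j x := by
    rintro ⟨j, hj⟩
    have hm1 : 1 ≤ y := by
      obtain ⟨m, j1, j2, hjj, _, hy2⟩ := h
      exact (T.insub_mem hy2).1
    exact (T.descend_not_leftOf (T.insub_descend hj hm1)).1 h
  rw [card, dif_neg hni, if_neg (by tauto)]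

lemma card_right {x y : ℕ} (h1 : 1 ≤ x) (hxy : x < y) (h2 : y ≤ n)
    (h : T.LeftOf y x) : T.card y x = s y := by
  have hni : ¬ ∃ j, T.InSub y j x := by
    rintro ⟨j, hj⟩
    exact (T.descend_not_leftOf (T.insub_descend hj (by omega))).2 h
  rw [card, dif_neg hni, if_pos ⟨h1, hxy, h2, T.leftOf_asymm h⟩]

lemma card_x_zero (y : ℕ) : T.card y 0 = 0 := by
  have hni : ¬ ∃ j, T.InSub y j 0 := by
    rintro ⟨j, hj⟩
    have := (T.insub_mem hj).1
    omega
  rw [card, dif_neg hni, if_neg (by omega)]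

lemma card_gt_n {z : ℕ} (hz : n < z) (y : ℕ) : T.card z y = 0 := by
  have hni : ¬ ∃ j, T.InSub z j y := by
    rintro ⟨j, c, hc, hp, hi⟩
    have hm := (T.descend_mem hc).2
    rcases lt_or_eq_of_le hm.2 with hlt | heq
    · have := T.parent_le c hm.1 hlt; omega
    · have := T.parent_out c (Or.inr heq.ge); omega
  rw [card, dif_neg hni, if_neg (by omega)]

/-- If `u ∈ T^v` then `u` and `v` determine the same cardinality w.r.t. any `w > v`. -/
lemma card_descend_congr {u v w : ℕ} (h : T.Descend u v) (hvw : v < w)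
    (hw : w ≤ n) : T.card w u = T.card w v := by
  have hmem := T.descend_mem h
  rcases T.trichotomy (x := v) (y := w) hmem.2.1 hvw hw with ⟨j, hj⟩ | hl | hl
  · rw [T.card_insub hj, T.card_insub (T.insub_comp h hj)]
  · obtain ⟨m, p, q, hpq, hv, hwv⟩ := hl
    rw [T.card_left ⟨m, p, q, hpq, hv, hwv⟩,
      T.card_left ⟨m, p, q, hpq, T.insub_comp h hv, hwv⟩]
  · obtain ⟨m, p, q, hpq, hwv, hv⟩ := hl
    rw [T.card_right hmem.2.1 hvw hw ⟨m, p, q, hpq, hwv, hv⟩,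
      T.card_right hmem.1.1 (lt_of_le_of_lt (T.descend_le h) hvw) hw
        ⟨m, p, q, hpq, hwv, T.insub_comp h hv⟩]

lemma card_transitive : IsTransitiveInv (T.card) := by
  intro x y z hxy hyz
  rcases Nat.eq_zero_or_pos x with rfl | hx1
  · left; exact T.card_x_zero y
  rcases le_or_gt z n with hzn | hzn
  swap
  · right; rw [T.card_gt_n hzn y]; omega
  have hyn : y ≤ n := by omega
  rcases T.trichotomy hx1 hxy hyn with ⟨j, hj⟩ | hl | hl
  · right
    exact le_of_eq (T.card_descend_congr (T.insub_descend hj (by omega)) hyz hzn).symm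
  · left; exact T.card_left hl
  · -- x is right of y
    right
    rcases T.trichotomy (by omega) hyz hzn with ⟨r, hr⟩ | hl2 | hl2
    · -- y ∈ T^z_r
      rw [T.card_insub hr]
      rcases T.trichotomy hx1 (by omega) hzn with ⟨r', hr'⟩ | hl3 | hl3
      · rw [T.card_insub hr']
        by_contra hcon
        have hrr : r' < r := by omega
        exact T.leftOf_asymm ⟨z, r', r, hrr, hr', hr⟩ hl
      · obtain ⟨m, p, q, hpq, hxm, hzm⟩ := hl3
        exact absurd ⟨m, p, q, hpq, hxm,
          T.insub_comp (T.insub_descend hr (by omega)) hzm⟩ (T.leftOf_asymm hl)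
      · rw [T.card_right hx1 (by omega) hzn hl3]
        exact T.insub_le_s hr (by omega)
    · rw [T.card_left hl2]; omega
    · -- z is left of y
      rw [T.card_right (by omega) hyz hzn hl2]
      have hlzx : T.LeftOf z x := by
        rcases T.trichotomy hx1 (by omega) hzn with ⟨r', hr'⟩ | hl3 | hl3
        · exfalso
          obtain ⟨m, q, q', hqq, hzm, hym⟩ := hl2
          exact T.leftOf_asymm ⟨m, q, q', hqq,
            T.insub_comp (T.insub_descend hr' (by omega)) hzm, hym⟩ hl
        · exfalso
          obtain ⟨m', p, q'', hpq'', hxm', hzm'⟩ := hl3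
          obtain ⟨m0, q0, p0, hq0p0, hym0, hxm0⟩ := hl
          have hm' : 1 ≤ m' := T.insub_pos hzm' (by omega)
          have hm0 : 1 ≤ m0 := T.insub_pos hxm0 (by omega)
          have hdx0 : T.Descend x m0 := T.insub_descend hxm0 hm0
          have hdx' : T.Descend x m' := T.insub_descend hxm' hm'
          rcases T.descend_total hdx0 hdx' with hd | hd
          · by_cases hmm : m0 = m'
            · subst hmm
              have := T.insub_unique hxm0 hxm'
              exact T.leftOf_asymm ⟨m0, q0, q'', by omega, hym0, hzm'⟩ hl2
            · have h1 := T.insub_up hdx0 hd hmm hxm'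
              have h2 := T.insub_comp (T.insub_descend hym0 hm0) h1
              exact T.leftOf_asymm ⟨m', p, q'', hpq'', h2, hzm'⟩ hl2
          · by_cases hmm : m' = m0
            · subst hmm
              have := T.insub_unique hxm0 hxm'
              exact T.leftOf_asymm ⟨m', q0, q'', by omega, hym0, hzm'⟩ hl2
            · have h1 := T.insub_up hdx' hd hmm hxm0
              have h2 := T.insub_comp (T.insub_descend hzm' hm') h1
              exact T.leftOf_asymm ⟨m0, q0, p0, hq0p0, hym0, h2⟩ hl2
        · exact hl3
      rw [T.card_right hx1 (by omega) hzn hlzx]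

lemma descend_entry {x z : ℕ} (h : T.Descend x z) (hne : x ≠ z) :
    ∃ j, T.InSub z j x := by
  obtain ⟨c, hc, hp, _, _⟩ := T.descend_entry_child h hne
  exact ⟨T.idx c, c, hc, hp, rfl⟩

/-- The explicit transitive multi-inversion set witnessing the rotation. -/
noncomputable def rotJ (T : SDecTree n s) (b a : ℕ) : ℕ → ℕ → ℕ := fun y x =>
  T.card y x + (if y = b ∧ T.InSubMinus0 a x then 1 else 0)

/-- Evaluation of the transitive closure defining the rotation. -/
theorem rot_tc_eval {a b : ℕ} (hasc : T.TreeAscent a b) (y x : ℕ) :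
    tcInv (addInv s T.card b a) y x
      = T.card y x + (if y = b ∧ T.InSubMinus0 a x then 1 else 0) := by
  obtain ⟨ha1, hab, hbn, ⟨i, hi, hia⟩, hcond2, hcond3⟩ := hasc
  have han : a ≤ n := by omega
  have hdab : T.Descend a b := T.insub_descend hia (by omega)
  have hMdesc : ∀ x, T.InSubMinus0 a x → T.Descend x a := by
    rintro x (rfl | ⟨j, hj, hjx⟩)
    · exact T.descend_refl ha1 han
    · exact T.insub_descend hjx ha1
  have hcba : T.card b a = i := T.card_insub hia
  have hcardM : ∀ x, T.InSubMinus0 a x → T.card b x = i := fun x hx => by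
    rw [T.card_descend_congr (hMdesc x hx) hab hbn, hcba]
  have hM0 : ¬ T.InSubMinus0 a 0 := by
    rintro (h0 | ⟨j, hj, hjx⟩)
    · omega
    · have := (T.insub_mem hjx).1; omega
  -- transitivity of rotJ
  have hJtrans : IsTransitiveInv (rotJ T b a) := by
    intro x y z hxy hyz
    rcases Nat.eq_zero_or_pos x with rfl | hx1
    · left; simp [rotJ, T.card_x_zero, hM0]
    by_cases hzb : z = b
    · subst z
      have hyb : ¬ y = b := by omega
      have hJyx : rotJ T b a y x = T.card y x := by simp [rotJ, hyb]
      by_cases hMy : T.InSubMinus0 a y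
      · have hcby : T.card b y = i := hcardM y hMy
        by_cases hMx : T.InSubMinus0 a x
        · right
          have e1 : rotJ T b a b y = i + 1 := by simp [rotJ, hMy, hcby]
          have e2 : rotJ T b a b x = i + 1 := by simp [rotJ, hMx, hcardM x hMx]
          omega
        · have hyn : y ≤ n := by omega
          rcases T.trichotomy hx1 hxy hyn with ⟨j, hj⟩ | hl | hl
          · -- x ∈ T^y_j
            rcases Nat.eq_zero_or_pos j with rfl | hj1
            · left; rw [hJyx, T.card_insub hj]
            · exfalso
              apply hMx
              rcases hMy with rfl | ⟨j', hj', hj'y⟩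
              · exact Or.inr ⟨j, hj1, hj⟩
              · exact Or.inr ⟨j', hj',
                  T.insub_comp (T.insub_descend hj (by omega)) hj'y⟩
          · left; rw [hJyx, T.card_left hl]
          · -- y is left of x
            right
            obtain ⟨m, p, q, hpq, hmy, hmx⟩ := hl
            have hm1 : 1 ≤ m := T.insub_pos hmx (by omega)
            have key : i + 1 ≤ T.card b x := by
              by_cases hma : m = a
              · subst m
                have hqs : q ≤ s a := T.insub_le_s hmx ha1
                rcases lt_or_eq_of_le hqs with hlt | heq
                · exact absurd (Or.inr ⟨q, by omega, hmx⟩) hMx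
                · exact absurd (heq ▸ hmx) (hcond3 (by omega) x)
              · have hdya : T.Descend y a := hMdesc y hMy
                have hdym : T.Descend y m := T.insub_descend hmy hm1
                rcases T.descend_total hdya hdym with hd | hd
                · -- a ∈ T^m
                  have hpa : T.InSub m p a :=
                    T.insub_up hdya hd (fun h => hma h.symm) hmy
                  by_cases hmb : m = b
                  · subst m
                    have hpi : p = i := T.insub_unique hpa hia
                    have hq : T.card b x = q := T.card_insub hmx
                    omega
                  · rcases T.descend_total hd hdab with hd2 | hd2
                    · -- m ∈ T^b, strictly between a and b
                      have ham : a < m := T.insub_lt hpa hm1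
                      have hmbx : m < b := lt_of_le_of_ne (T.descend_le hd2) hmb
                      have hps := hcond2 m p ham hmbx hpa
                      have hqs := T.insub_le_s hmx hm1
                      omega
                    · -- b ∈ T^m, so b is left of x
                      have hpb : T.InSub m p b :=
                        T.insub_up hdab hd2 (fun h => hmb h.symm) hpa
                      have hlbx : T.LeftOf b x := ⟨m, p, q, hpq, hpb, hmx⟩
                      rw [T.card_right hx1 (by omega) hbn hlbx]
                      omega
                · -- m strictly inside T^a
                  obtain ⟨p'', hp''⟩ := T.descend_entry hd hma
                  by_cases hp0 : p'' = 0
                  · exfalso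
                    rcases hMy with rfl | ⟨j', hj', hj'y⟩
                    · exact hma (T.descend_antisymm hd hdym)
                    · have h4 := T.insub_comp hdym hp''
                      have := T.insub_unique hj'y h4
                      omega
                  · exfalso
                    apply hMx
                    exact Or.inr ⟨p'', by omega,
                      T.insub_comp (T.insub_descend hmx hm1) hp''⟩
            have e1 : rotJ T b a b y = i + 1 := by simp [rotJ, hMy, hcby]
            have e2 : rotJ T b a b x = T.card b x := by simp [rotJ, hMx]
            omega
      · -- ¬ M y
        rcases T.card_transitive x y b hxy hyz with h0 | hle
        · left; rw [hJyx, h0]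
        · right
          have e1 : rotJ T b a b y = T.card b y := by simp [rotJ, hMy]
          have e2 : T.card b x ≤ rotJ T b a b x := Nat.le_add_right _ _
          omega
    · -- z ≠ b
      have e2 : rotJ T b a z y = T.card z y := by simp [rotJ, hzb]
      have e3 : rotJ T b a z x = T.card z x := by simp [rotJ, hzb]
      by_cases hyb : y = b
      · subst y
        by_cases hc0 : T.card b x = 0
        · by_cases hMx : T.InSubMinus0 a x
          · right
            rcases le_or_gt z n with hzn | hzn
            · have e4 : T.card z x = T.card z b :=
                T.card_descend_congr (T.descend_trans (hMdesc x hMx) hdab) hyz hzn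
              omega
            · rw [e2, T.card_gt_n hzn]; omega
          · left; simp [rotJ, hc0, hMx]
        · rcases T.card_transitive x b z hxy hyz with h0 | hle
          · exact absurd h0 hc0
          · right; omega
      · have e1 : rotJ T b a y x = T.card y x := by simp [rotJ, hyb]
        rcases T.card_transitive x y z hxy hyz with h0 | hle
        · left; omega
        · right; omega
  -- rotJ dominates addInv
  have hJge : ∀ y' x', addInv s T.card b a y' x' ≤ rotJ T b a y' x' := by
    intro y' x'
    unfold addInv
    split_ifs with h
    · obtain ⟨h1, h2⟩ := h
      subst y'; subst x'
      have : rotJ T b a b a = T.card b a + 1 := by simp [rotJ, InSubMinus0]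
      omega
    · exact Nat.le_add_right _ _
  -- addInv dominates card
  have hIle : ∀ y' x', T.card y' x' ≤ addInv s T.card b a y' x' := by
    intro y' x'
    unfold addInv
    split_ifs with h
    · obtain ⟨h1, h2⟩ := h
      subst y'; subst x'
      rw [hcba]
      omega
    · exact le_rfl
  have haddba : addInv s T.card b a b a = i + 1 := by
    unfold addInv
    rw [if_pos ⟨rfl, rfl⟩, hcba]
    omega
  have hmemJ : rotJ T b a y x ∈ {m | ∃ J' : ℕ → ℕ → ℕ, IsTransitiveInv J' ∧
      (∀ y' x', addInv s T.card b a y' x' ≤ J' y' x') ∧ J' y x = m} :=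
    ⟨rotJ T b a, hJtrans, hJge, rfl⟩
  have hupper : tcInv (addInv s T.card b a) y x ≤ rotJ T b a y x :=
    Nat.sInf_le hmemJ
  have hlower : T.card y x + (if y = b ∧ T.InSubMinus0 a x then 1 else 0) ≤
      tcInv (addInv s T.card b a) y x := by
    apply le_csInf ⟨_, hmemJ⟩
    rintro m ⟨J', ht, hge, rfl⟩
    have hbase : T.card y x ≤ J' y x := le_trans (hIle y x) (hge y x)
    split_ifs with h
    · obtain ⟨hyb', hMx⟩ := h
      subst y
      rcases hMx with hxa' | ⟨j, hj, hjx⟩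
      · subst x
        have := hge b a
        rw [haddba] at this
        omega
      · have hxa : x < a := T.insub_lt hjx ha1
        rcases ht x a b hxa hab with h0 | hle
        · have h5 : T.card a x ≤ J' a x := le_trans (hIle a x) (hge a x)
          rw [T.card_insub hjx] at h5
          omega
        · have h1 : addInv s T.card b a b a ≤ J' b a := hge b a
          have h3 : T.card b x = i := hcardM x (Or.inr ⟨j, hj, hjx⟩)
          omega
    · exact hbase
  have : rotJ T b a y x =
      T.card y x + (if y = b ∧ T.InSubMinus0 a x then 1 else 0) := rfl
  omega

end SDecTree

/-- description of the inversions added by the `s`-tree rotation of `T`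
along a tree ascent `(a,b)`. -/
theorem inversions_added (n : ℕ) (s : ℕ → ℕ) (T Z : SDecTree n s) (a b : ℕ)
    (hrot : SDecTree.IsRotation T Z a b) :
    ∀ f e, 1 ≤ e → e < f → f ≤ n →
      (((f, e) ∈ SDecTree.Aset T Z) ↔ (f = b ∧ T.InSubMinus0 a e)) ∧
      (f = b → T.InSubMinus0 a e → Z.card f e = T.card f e + 1) := by
  intro f e he hef hfn
  have hZ : Z.card f e = T.card f e +
      (if f = b ∧ T.InSubMinus0 a e then 1 else 0) := by
    rw [hrot.2 f e he hef hfn, T.rot_tc_eval hrot.1]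
  constructor
  · have hmem : ((f, e) ∈ SDecTree.Aset T Z) ↔ T.card f e < Z.card f e :=
      Iff.rfl
    rw [hmem, hZ]
    split_ifs with h
    · simp [h]
    · simp [h]
  · intro hf hM
    rw [hZ, if_pos ⟨hf, hM⟩]
end
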